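/- arXiv:2207.04274 — 3 statements merged into one kernel-verified Lean document; each statement's English description precedes it below -/
import Mathlib

section
/- Let V_ε be the Yamada–Watanabe approximation of |·| with 0 ≤ V_ε''(x) ≤ (2ε/|x|)·1_{[ε/e^{1/ε},ε]}(|x|). Suppose σ : ℝ → ℝ satisfies |σ(x) − σ(y)| ≤ K|x−y|^α with α ∈ [1/2, 1]. Then for all x, y ∈ ℝ, V_ε''(x−y)·(σ(x)−σ(y))² ≤ 2K²ε^{2α}. -/
open MeasureTheory Set Real

/-- Key Yamada–Watanabe estimate: if `0 ≤ V'' ≤ (2ε/|z|)·1_{[ε/e^{1/ε},ε]}(|z|)` and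
`σ` is `α`-Hölder with `α ∈ [1/2,1]`, then `V''(x−y)(σ(x)−σ(y))² ≤ 2K²ε^{2α}`. -/
theorem yamada_watanabe_key_estimate (ε α K : ℝ) (hε : ε ∈ Set.Ioo (0:ℝ) 1)
    (hα : α ∈ Set.Icc (1/2 : ℝ) 1) (hK : 0 ≤ K)
    (Vpp : ℝ → ℝ)
    (hVpp0 : ∀ z, 0 ≤ Vpp z)
    (hVpp : ∀ z : ℝ, Vpp z ≤
      (if |z| ∈ Set.Icc (ε / Real.exp (1/ε)) ε then 2 * ε / |z| else 0))
    (σ : ℝ → ℝ) (hσ : ∀ x y : ℝ, |σ x - σ y| ≤ K * |x - y| ^ α) :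
    ∀ x y : ℝ, Vpp (x - y) * (σ x - σ y) ^ 2 ≤ 2 * K ^ 2 * ε ^ (2 * α) := by
  intro x y
  obtain ⟨hε0, hε1⟩ := hε
  obtain ⟨hα2, hα1⟩ := hα
  have hRHS : 0 ≤ 2 * K ^ 2 * ε ^ (2 * α) := by positivity
  set z := x - y with hz
  by_cases hmem : |z| ∈ Set.Icc (ε / Real.exp (1/ε)) ε
  · have hzpos : 0 < |z| := lt_of_lt_of_le (by positivity) hmem.1
    have hσ2 : (σ x - σ y) ^ 2 ≤ K ^ 2 * |z| ^ (2 * α) := by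
      have h1 : |σ x - σ y| ≤ K * |z| ^ α := hσ x y
      have h2 : (σ x - σ y) ^ 2 = |σ x - σ y| ^ 2 := (sq_abs _).symm
      rw [h2]
      calc |σ x - σ y| ^ 2 ≤ (K * |z| ^ α) ^ 2 := by
            apply pow_le_pow_left₀ (abs_nonneg _) h1
        _ = K ^ 2 * |z| ^ (2 * α) := by
            rw [mul_pow, ← Real.rpow_natCast (|z| ^ α) 2, ← Real.rpow_mul (abs_nonneg _)]
            norm_num [mul_comm]
    have hstep : Vpp z * (σ x - σ y) ^ 2 ≤ (2 * ε / |z|) * (K ^ 2 * |z| ^ (2 * α)) := by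
      apply mul_le_mul _ hσ2 (sq_nonneg _) (by positivity)
      have := hVpp z
      rwa [if_pos hmem] at this
    refine hstep.trans ?_
    have hid : (2 * ε / |z|) * (K ^ 2 * |z| ^ (2 * α))
        = 2 * K ^ 2 * (ε * |z| ^ (2 * α - 1)) := by
      have : |z| ^ (2 * α) = |z| ^ (2 * α - 1) * |z| := by
        rw [← Real.rpow_add_one hzpos.ne' (2 * α - 1)]; norm_num
      rw [this]; field_simp
    rw [hid]
    have hexp : (0:ℝ) ≤ 2 * α - 1 := by linarith
    have hmono : |z| ^ (2 * α - 1) ≤ ε ^ (2 * α - 1) :=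
      Real.rpow_le_rpow (abs_nonneg _) hmem.2 hexp
    have : ε * |z| ^ (2 * α - 1) ≤ ε * ε ^ (2 * α - 1) :=
      mul_le_mul_of_nonneg_left hmono hε0.le
    have heq : ε * ε ^ (2 * α - 1) = ε ^ (2 * α) := by
      rw [mul_comm, ← Real.rpow_add_one hε0.ne' (2 * α - 1)]; norm_num
    calc 2 * K ^ 2 * (ε * |z| ^ (2 * α - 1)) ≤ 2 * K ^ 2 * (ε * ε ^ (2 * α - 1)) := by
          apply mul_le_mul_of_nonneg_left this (by positivity)
      _ = 2 * K ^ 2 * ε ^ (2 * α) := by rw [heq]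
  · have hVz : Vpp z = 0 := by
      have := hVpp z
      rw [if_neg hmem] at this
      exact le_antisymm this (hVpp0 z)
    rw [hVz, zero_mul]
    exact hRHS
end

section
/- Let b : ℝ × P₁(ℝ) → ℝ satisfy (b(x,μ) − b(y,ν))·sgn(x−y) ≤ K_b(W₁(μ,ν) + |x−y|) for all x,y ∈ ℝ and μ,ν ∈ P₁(ℝ), where K_b ≥ 0. Define b̂ : ℝ^N → ℝ^N by b̂(x)_i = b(x_i, μ̃ᴺ_x) with μ̃ᴺ_x = (1/N)∑δ_{x_j}. Then ⟨b̂(x) − b̂(y), x − y⟩ ≤ 2K_b ∑_{i=1}^N |x_i − y_i|² for all x, y ∈ ℝ^N. -/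
open MeasureTheory Set Real

noncomputable def W1 (μ ν : Measure ℝ) : ℝ :=
  sInf {c : ℝ | ∃ pi : Measure (ℝ × ℝ), IsProbabilityMeasure pi ∧
    pi.fst = μ ∧ pi.snd = ν ∧ c = ∫ p : ℝ × ℝ, |p.1 - p.2| ∂pi}

def P1 (μ : Measure ℝ) : Prop :=
  IsProbabilityMeasure μ ∧ Integrable (fun z : ℝ => |z|) μ

noncomputable def empMeas (N : ℕ) (x : Fin N → ℝ) : Measure ℝ :=
  ((N : ENNReal))⁻¹ • ∑ i : Fin N, Measure.dirac (x i)

lemma integrable_dirac' {α E : Type*} [MeasurableSpace α] [MeasurableSingletonClass α]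
    [NormedAddCommGroup E] (f : α → E) (a : α) : Integrable f (Measure.dirac a) := by
  have h : f =ᵐ[Measure.dirac a] fun _ => f a := by
    rw [Filter.EventuallyEq, ae_dirac_eq]; simp
  exact (integrable_congr h).mpr (integrable_const _)

lemma map_finset_sum' {α β ι : Type*} [MeasurableSpace α] [MeasurableSpace β]
    {f : α → β} (hf : Measurable f) (s : Finset ι) (μ : ι → Measure α) :
    (∑ i ∈ s, μ i).map f = ∑ i ∈ s, (μ i).map f := by
  classical
  induction s using Finset.induction with
  | empty => simp
  | insert _ _ h ih => simp [Finset.sum_insert h, Measure.map_add _ _ hf, ih]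

lemma sign_mul_abs' (r : ℝ) : Real.sign r * |r| = r := by
  rcases lt_trichotomy r 0 with h|h|h
  · rw [Real.sign_of_neg h, abs_of_neg h]; ring
  · simp [h]
  · rw [Real.sign_of_pos h, abs_of_pos h]; ring

lemma P1_empMeas (N : ℕ) (hN : 1 ≤ N) (x : Fin N → ℝ) : P1 (empMeas N x) := by
  have hN0 : (N : ENNReal) ≠ 0 := Nat.cast_ne_zero.mpr (by omega)
  constructor
  · constructor
    simp [empMeas, Measure.smul_apply, Measure.finset_sum_apply, Finset.card_univ,
      ENNReal.inv_mul_cancel hN0 (by simp : (N : ENNReal) ≠ ⊤)]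
  · apply Integrable.smul_measure _ (by simp [hN0])
    exact integrable_finset_sum_measure.mpr fun i _ => _root_.integrable_dirac' _ _

lemma W1_empMeas_le (N : ℕ) (hN : 1 ≤ N) (x y : Fin N → ℝ) :
    W1 (empMeas N x) (empMeas N y) ≤ (N : ℝ)⁻¹ * ∑ j : Fin N, |x j - y j| := by
  have hN0 : (N : ENNReal) ≠ 0 := Nat.cast_ne_zero.mpr (by omega)
  set pl : Measure (ℝ × ℝ) := ((N : ENNReal))⁻¹ • ∑ j : Fin N, Measure.dirac (x j, y j) with hpl
  apply csInf_le
  · exact ⟨0, fun c ⟨p, hp, _, _, hc⟩ => hc ▸ integral_nonneg fun _ => abs_nonneg _⟩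
  refine ⟨pl, ?_, ?_, ?_, ?_⟩
  · constructor
    simp [hpl, Measure.smul_apply, Measure.finset_sum_apply, Finset.card_univ,
      ENNReal.inv_mul_cancel hN0 (by simp : (N : ENNReal) ≠ ⊤)]
  · rw [hpl, Measure.fst, Measure.map_smul, map_finset_sum' measurable_fst]
    simp [Measure.map_dirac' measurable_fst, empMeas]
  · rw [hpl, Measure.snd, Measure.map_smul, map_finset_sum' measurable_snd]
    simp [Measure.map_dirac' measurable_snd, empMeas]
  · rw [hpl, integral_smul_measure,
      integral_finset_sum_measure (fun j _ => _root_.integrable_dirac' _ _)]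
    simp [integral_dirac, ENNReal.toReal_inv]

/-- One-sided Lipschitz estimate for the lifted drift of the particle system. -/
theorem particle_drift_one_sided_estimate (N : ℕ) (hN : 1 ≤ N) (Kb : ℝ) (hKb : 0 ≤ Kb)
    (b : ℝ → Measure ℝ → ℝ)
    (hb : ∀ x y : ℝ, ∀ μ ν : Measure ℝ, P1 μ → P1 ν →
      (b x μ - b y ν) * Real.sign (x - y) ≤ Kb * (W1 μ ν + |x - y|))
    (bhat : (Fin N → ℝ) → Fin N → ℝ)
    (hbhat : ∀ x : Fin N → ℝ, ∀ i : Fin N, bhat x i = b (x i) (empMeas N x)) :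
    ∀ x y : Fin N → ℝ,
      (∑ i : Fin N, (bhat x i - bhat y i) * (x i - y i)) ≤
        2 * Kb * ∑ i : Fin N, |x i - y i| ^ 2 := by
  intro x y
  set W := W1 (empMeas N x) (empMeas N y) with hW
  set S := ∑ j : Fin N, |x j - y j| with hS
  set Q := ∑ j : Fin N, |x j - y j| ^ 2 with hQ
  have hWS : W ≤ (N : ℝ)⁻¹ * S := W1_empMeas_le N hN x y
  have hstep : ∀ i : Fin N,
      (bhat x i - bhat y i) * (x i - y i) ≤ Kb * ((N : ℝ)⁻¹ * S + |x i - y i|) * |x i - y i| := by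
    intro i
    have h1 := hb (x i) (y i) _ _ (P1_empMeas N hN x) (P1_empMeas N hN y)
    calc (bhat x i - bhat y i) * (x i - y i)
        = ((b (x i) (empMeas N x) - b (y i) (empMeas N y)) * Real.sign (x i - y i))
            * |x i - y i| := by
          rw [hbhat, hbhat, mul_assoc, sign_mul_abs']
      _ ≤ (Kb * (W + |x i - y i|)) * |x i - y i| :=
          mul_le_mul_of_nonneg_right h1 (abs_nonneg _)
      _ ≤ Kb * ((N : ℝ)⁻¹ * S + |x i - y i|) * |x i - y i| := by
          apply mul_le_mul_of_nonneg_right _ (abs_nonneg _)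
          exact mul_le_mul_of_nonneg_left (by linarith) hKb
  have hsum : (∑ i : Fin N, (bhat x i - bhat y i) * (x i - y i)) ≤
      ∑ i : Fin N, Kb * ((N : ℝ)⁻¹ * S + |x i - y i|) * |x i - y i| :=
    Finset.sum_le_sum fun i _ => hstep i
  have hCS : S ^ 2 ≤ N * Q := by
    have := sq_sum_le_card_mul_sum_sq (s := Finset.univ) (f := fun j : Fin N => |x j - y j|)
    simpa [hS, hQ] using this
  have hNpos : (0 : ℝ) < N := by exact_mod_cast Nat.lt_of_lt_of_le Nat.zero_lt_one hN
  have hexp : ∑ i : Fin N, Kb * ((N : ℝ)⁻¹ * S + |x i - y i|) * |x i - y i|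
      = Kb * ((N : ℝ)⁻¹ * S * S + Q) := by
    have : ∀ i : Fin N, Kb * ((N : ℝ)⁻¹ * S + |x i - y i|) * |x i - y i|
        = Kb * ((N : ℝ)⁻¹ * S * |x i - y i| + |x i - y i| ^ 2) := by intro i; ring
    simp_rw [this, ← Finset.mul_sum, Finset.sum_add_distrib, ← Finset.mul_sum]
    rfl
  have h2 : (N : ℝ)⁻¹ * (S * S) ≤ Q := by
    rw [inv_mul_le_iff₀ hNpos]
    calc S * S = S ^ 2 := by ring
      _ ≤ N * Q := hCS
  have hfin : Kb * ((N : ℝ)⁻¹ * S * S + Q) ≤ 2 * Kb * Q := by nlinarith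
  linarith [hsum, hfin, hexp.le, hexp.ge]
end

section
/- Let μ, ν be probability measures on a measurable space (E,ℰ). Then ‖μ − ν‖_var² ≤ 2·Ent(ν|μ), where ‖μ−ν‖_var = sup_{|f|≤1} |μ(f) − ν(f)| is the total variation distance and Ent(ν|μ) = ∫ log(dν/dμ) dν if ν ≪ μ and +∞ otherwise. -/
open MeasureTheory Set Real
open scoped Classical

variable {E : Type*} [MeasurableSpace E]

/-- Total variation distance `sup_{|f|≤1} |μ(f) − ν(f)|`. -/
noncomputable def varDist (μ ν : Measure E) : ℝ :=
  sSup {c : ℝ | ∃ f : E → ℝ, Measurable f ∧ (∀ x, |f x| ≤ 1) ∧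
    c = |(∫ x, f x ∂μ) - ∫ x, f x ∂ν|}

/-- Relative entropy `Ent(ν|μ)`, with value `⊤` if `ν` is not absolutely
continuous with respect to `μ` (or the entropy integral diverges). -/

noncomputable def relEnt (μ ν : Measure E) : EReal :=
  if ν ≪ μ ∧ Integrable (fun x => Real.log ((ν.rnDeriv μ x).toReal)) ν then
    ((∫ x, Real.log ((ν.rnDeriv μ x).toReal) ∂ν : ℝ) : EReal)
  else ⊤

private lemma psi_deriv {t : ℝ} (ht : 0 < t) :
    HasDerivAt (fun t : ℝ => (4*t+4) * Real.log t - 8*(t-1))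
      (4 * Real.log t + (4*t+4)/t - 8) t := by
  have h1 : HasDerivAt (fun t : ℝ => (4*t+4) * Real.log t)
      (4 * Real.log t + (4*t+4) * t⁻¹) t := by
    have h := (((hasDerivAt_id t).const_mul 4).add_const 4).mul (Real.hasDerivAt_log ht.ne')
    simp at h
    exact h
  have h2 : HasDerivAt (fun t : ℝ => 8*(t-1)) 8 t := by
    simpa using ((hasDerivAt_id t).sub_const 1).const_mul 8
  have := h1.sub h2
  rw [div_eq_mul_inv]
  exact this

private lemma phi_deriv {t : ℝ} (ht : 0 < t) :
    HasDerivAt (fun t : ℝ => (2*t+4)*(t*Real.log t - t + 1) - 3*(t-1)^2)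
      ((4*t+4) * Real.log t - 8*(t-1)) t := by
  have hlog : HasDerivAt (fun t : ℝ => t * Real.log t) (Real.log t + 1) t := by
    have := (hasDerivAt_id t).mul (Real.hasDerivAt_log ht.ne')
    simp [mul_inv_cancel₀ ht.ne'] at this
    exact this
  have hinner : HasDerivAt (fun t : ℝ => t*Real.log t - t + 1) (Real.log t) t := by
    simpa using (hlog.sub (hasDerivAt_id t)).add_const 1
  have hfst : HasDerivAt (fun t : ℝ => 2*t+4) 2 t := by
    simpa using ((hasDerivAt_id t).const_mul 2).add_const 4
  have hsq : HasDerivAt (fun t : ℝ => 3*(t-1)^2) (3*(2*(t-1))) t := by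
    simpa using (((hasDerivAt_id t).sub_const 1).pow 2).const_mul 3
  have := (hfst.mul hinner).sub hsq
  have e : (4*t+4) * Real.log t - 8*(t-1)
      = 2 * (t*Real.log t - t + 1) + (2*t+4) * Real.log t - 3*(2*(t-1)) := by ring
  rw [e]
  exact this

private lemma psi_mono : MonotoneOn (fun t : ℝ => (4*t+4) * Real.log t - 8*(t-1)) (Ioi 0) := by
  apply monotoneOn_of_deriv_nonneg (convex_Ioi 0)
  · exact fun x hx => (psi_deriv hx).continuousAt.continuousWithinAt
  · rw [interior_Ioi]
    exact fun x hx => (psi_deriv hx).differentiableAt.differentiableWithinAt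
  · rw [interior_Ioi]
    intro x hx
    rw [(psi_deriv hx).deriv]
    have hx : (0:ℝ) < x := hx
    have hlog : Real.log x⁻¹ ≤ x⁻¹ - 1 := Real.log_le_sub_one_of_pos (by positivity)
    rw [Real.log_inv] at hlog
    have hd : (4*x+4)/x = 4 + 4 * x⁻¹ := by field_simp
    rw [hd]
    nlinarith [mul_pos hx (inv_pos.mpr hx)]

private lemma key_ineq {t : ℝ} (ht : 0 ≤ t) :
    3*(t-1)^2/(2*t+4) ≤ t * Real.log t - t + 1 := by
  have hden : (0:ℝ) < 2*t+4 := by linarith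
  rcases eq_or_lt_of_le ht with rfl | ht
  · simp [Real.log_zero]; norm_num
  -- phi ≥ 0 for t > 0
  have hphi1 : (fun t : ℝ => (2*t+4)*(t*Real.log t - t + 1) - 3*(t-1)^2) 1 = 0 := by
    simp [Real.log_one]
  have hpsi1 : (fun t : ℝ => (4*t+4) * Real.log t - 8*(t-1)) 1 = 0 := by
    simp [Real.log_one]
  have hphi : 0 ≤ (2*t+4)*(t*Real.log t - t + 1) - 3*(t-1)^2 := by
    rcases le_total t 1 with h1 | h1
    · -- antitone on Ioc 0 1
      have : AntitoneOn (fun t : ℝ => (2*t+4)*(t*Real.log t - t + 1) - 3*(t-1)^2) (Ioc 0 1) := by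
        apply antitoneOn_of_deriv_nonpos (convex_Ioc 0 1)
        · exact fun x hx => (phi_deriv hx.1).continuousAt.continuousWithinAt
        · rw [interior_Ioc]
          exact fun x hx => (phi_deriv hx.1).differentiableAt.differentiableWithinAt
        · rw [interior_Ioc]
          intro x hx
          rw [(phi_deriv hx.1).deriv]
          have := psi_mono (mem_Ioi.mpr hx.1) (mem_Ioi.mpr one_pos) hx.2.le
          rw [hpsi1] at this
          exact this
      have := this (mem_Ioc.mpr ⟨ht, h1⟩) (mem_Ioc.mpr ⟨one_pos, le_refl 1⟩) h1
      rw [hphi1] at this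
      simpa using this
    · have : MonotoneOn (fun t : ℝ => (2*t+4)*(t*Real.log t - t + 1) - 3*(t-1)^2) (Ici 1) := by
        apply monotoneOn_of_deriv_nonneg (convex_Ici 1)
        · exact fun x hx => (phi_deriv (lt_of_lt_of_le one_pos hx)).continuousAt.continuousWithinAt
        · rw [interior_Ici]
          exact fun x hx => (phi_deriv (lt_trans one_pos hx)).differentiableAt.differentiableWithinAt
        · rw [interior_Ici]
          intro x hx
          rw [(phi_deriv (lt_trans one_pos hx)).deriv]
          have := psi_mono (mem_Ioi.mpr one_pos) (mem_Ioi.mpr (lt_trans one_pos hx)) hx.le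
          rw [hpsi1] at this
          exact this
      have := this (mem_Ici.mpr (le_refl 1)) (mem_Ici.mpr h1) h1
      rw [hphi1] at this
      simpa using this
  rw [div_le_iff₀ hden]
  nlinarith [hphi]

/-- Pinsker's inequality: `‖μ − ν‖_var² ≤ 2 Ent(ν|μ)`. -/
theorem pinsker_inequality (μ ν : Measure E)
    [IsProbabilityMeasure μ] [IsProbabilityMeasure ν] :
    ((varDist μ ν ^ 2 : ℝ) : EReal) ≤ 2 * relEnt μ ν := by
  rw [relEnt]
  split_ifs with h
  swap
  · rw [EReal.mul_top_of_pos (by norm_num : (0:EReal) < 2)]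
    exact le_top
  obtain ⟨hνμ, hint⟩ := h
  set G : E → ℝ := fun x => (ν.rnDeriv μ x).toReal with hGdef
  have hGm : Measurable G := (Measure.measurable_rnDeriv ν μ).ennreal_toReal
  have hG0 : ∀ x, 0 ≤ G x := fun x => ENNReal.toReal_nonneg
  have hGint : Integrable G μ := Measure.integrable_toReal_rnDeriv
  have hGone : ∫ x, G x ∂μ = 1 := by
    rw [hGdef, Measure.integral_toReal_rnDeriv hνμ]; simp
  set I : ℝ := ∫ x, Real.log (G x) ∂ν with hIdef
  -- G log G integrable wrt μ and its integral equals I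
  have hGlog : Integrable (fun x => G x * Real.log (G x)) μ := by
    have := (MeasureTheory.integrable_rnDeriv_smul_iff (f := fun x => Real.log (G x)) hνμ).mpr hint
    simpa [smul_eq_mul] using this
  have hIeq : ∫ x, G x * Real.log (G x) ∂μ = I := by
    rw [hIdef, ← MeasureTheory.integral_rnDeriv_smul hνμ (f := fun x => Real.log (G x))]
    simp [smul_eq_mul]
    rfl
  -- step A : varDist ≤ ∫ |G - 1|
  have habs_int : Integrable (fun x => |G x - 1|) μ := (hGint.sub (integrable_const 1)).abs
  set V : ℝ := ∫ x, |G x - 1| ∂μ with hVdef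
  have hub : ∀ c ∈ {c : ℝ | ∃ f : E → ℝ, Measurable f ∧ (∀ x, |f x| ≤ 1) ∧
      c = |(∫ x, f x ∂μ) - ∫ x, f x ∂ν|}, c ≤ V := by
    rintro c ⟨f, hfm, hfb, rfl⟩
    have hfint : Integrable f μ := by
      refine Integrable.mono' (integrable_const 1) hfm.aestronglyMeasurable
        (ae_of_all _ fun x => ?_)
      simpa using hfb x
    have hGfint : Integrable (fun x => G x * f x) μ := by
      refine Integrable.mono' hGint (hGm.mul hfm).aestronglyMeasurable
        (ae_of_all _ fun x => ?_)
      calc ‖G x * f x‖ = |G x| * |f x| := abs_mul _ _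
        _ ≤ |G x| * 1 := mul_le_mul_of_nonneg_left (hfb x) (abs_nonneg _)
        _ = G x := by rw [mul_one, abs_of_nonneg (hG0 x)]
    have hν : ∫ x, f x ∂ν = ∫ x, G x * f x ∂μ := by
      rw [← MeasureTheory.integral_rnDeriv_smul hνμ (f := f)]
      simp [smul_eq_mul]
      rfl
    rw [hν, ← integral_sub hfint hGfint]
    calc |∫ x, (f x - G x * f x) ∂μ| ≤ ∫ x, |f x - G x * f x| ∂μ := by
          simpa using norm_integral_le_integral_norm (fun x => f x - G x * f x) (μ := μ)
      _ ≤ V := by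
          apply integral_mono (hfint.sub hGfint).abs habs_int
          intro x
          calc |f x - G x * f x| = |f x| * |1 - G x| := by rw [← abs_mul]; ring_nf
            _ ≤ 1 * |1 - G x| := mul_le_mul_of_nonneg_right (hfb x) (abs_nonneg _)
            _ = |G x - 1| := by rw [one_mul, abs_sub_comm]
  have hv0 : 0 ≤ varDist μ ν := by
    apply le_csSup ⟨V, hub⟩
    exact ⟨fun _ => 0, measurable_const, by simp, by simp⟩
  have hVle : varDist μ ν ≤ V :=
    Real.sSup_le hub (integral_nonneg fun x => abs_nonneg _)
  -- step B : Cauchy-Schwarz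
  set F : E → ℝ := fun x => Real.sqrt ((2*G x+4)/3) with hFdef
  set H : E → ℝ := fun x => Real.sqrt (3*(G x-1)^2/(2*G x+4)) with hHdef
  have hden : ∀ x, (0:ℝ) < 2*G x+4 := fun x => by have := hG0 x; linarith
  have hFm : Measurable F := Real.continuous_sqrt.measurable.comp
    (((hGm.const_mul 2).add_const 4).div_const 3)
  have hHm : Measurable H := Real.continuous_sqrt.measurable.comp
    ((((hGm.sub measurable_const).pow_const 2).const_mul 3).div
      ((hGm.const_mul 2).add_const 4))
  have hF2 : ∀ x, F x ^ 2 = (2*G x+4)/3 := fun x =>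
    Real.sq_sqrt (by have := hG0 x; positivity)
  have hH2 : ∀ x, H x ^ 2 = 3*(G x-1)^2/(2*G x+4) := fun x =>
    Real.sq_sqrt (by have := hden x; positivity)
  have hF2int : Integrable (fun x => F x ^ 2) μ := by
    simp only [hF2]
    exact ((hGint.const_mul 2).add (integrable_const 4)).div_const 3
  have hboundint : Integrable (fun x => G x * Real.log (G x) - G x + 1) μ :=
    (hGlog.sub hGint).add (integrable_const 1)
  have hH2bound : ∀ x, H x ^ 2 ≤ G x * Real.log (G x) - G x + 1 := by
    intro x
    rw [hH2]
    exact key_ineq (hG0 x)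
  have hH2int : Integrable (fun x => H x ^ 2) μ := by
    refine Integrable.mono' hboundint ((hHm.pow_const 2).aestronglyMeasurable)
      (ae_of_all _ fun x => ?_)
    rw [Real.norm_of_nonneg (by positivity)]
    exact hH2bound x
  have hpq : (2:ℝ).HolderConjugate 2 := ⟨by norm_num, by norm_num, by norm_num⟩
  have hofReal : ENNReal.ofReal (2:ℝ) = 2 := by norm_num
  have hFmem : MemLp F (ENNReal.ofReal 2) μ := by
    rw [hofReal]
    exact (memLp_two_iff_integrable_sq hFm.aestronglyMeasurable).mpr hF2int
  have hHmem : MemLp H (ENNReal.ofReal 2) μ := by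
    rw [hofReal]
    exact (memLp_two_iff_integrable_sq hHm.aestronglyMeasurable).mpr hH2int
  have cs := integral_mul_le_Lp_mul_Lq_of_nonneg hpq
    (ae_of_all _ fun x => Real.sqrt_nonneg _) (ae_of_all _ fun x => Real.sqrt_nonneg _)
    hFmem hHmem
  simp only [Real.rpow_two] at cs
  -- F * H = |G - 1|
  have hFH : ∀ x, F x * H x = |G x - 1| := by
    intro x
    rw [hFdef, hHdef]
    have h1 : (0:ℝ) ≤ (2*G x+4)/3 := by have := hG0 x; positivity
    rw [← Real.sqrt_mul h1]
    rw [show (2*G x+4)/3 * (3*(G x-1)^2/(2*G x+4)) = (G x - 1)^2 by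
      field_simp [(hden x).ne']]
    exact Real.sqrt_sq_eq_abs _
  have hFint2 : ∫ x, F x ^ 2 ∂μ = 2 := by
    simp only [hF2]
    rw [integral_div, integral_add (hGint.const_mul 2) (integrable_const 4),
      integral_const_mul, hGone]
    simp only [integral_const, measure_univ, ENNReal.toReal_one, one_smul, smul_eq_mul, mul_one]
    norm_num
  set B : ℝ := ∫ x, H x ^ 2 ∂μ with hBdef
  have hB0 : 0 ≤ B := integral_nonneg fun x => by positivity
  have hBI : B ≤ I := by
    rw [hBdef]
    calc ∫ x, H x ^ 2 ∂μ ≤ ∫ x, (G x * Real.log (G x) - G x + 1) ∂μ :=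
          integral_mono hH2int hboundint hH2bound
      _ = I := by
          have hsubint : Integrable (fun x => G x * Real.log (G x) - G x) μ :=
            hGlog.sub hGint
          rw [integral_add hsubint (integrable_const 1),
            integral_sub hGlog hGint, hGone, hIeq]
          simp
  have hVF : V = ∫ x, F x * H x ∂μ := by
    rw [hVdef]
    exact integral_congr_ae (ae_of_all _ fun x => (hFH x).symm)
  have hVB : V ≤ Real.sqrt (2 * B) := by
    rw [hVF]
    calc ∫ x, F x * H x ∂μ ≤ (∫ x, F x ^ 2 ∂μ) ^ ((1:ℝ)/2) * (∫ x, H x ^ 2 ∂μ) ^ ((1:ℝ)/2) := cs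
      _ = Real.sqrt 2 * Real.sqrt B := by
          rw [hFint2, ← hBdef, ← Real.sqrt_eq_rpow, ← Real.sqrt_eq_rpow]
      _ = Real.sqrt (2 * B) := (Real.sqrt_mul (by norm_num) B).symm
  -- conclude
  have hsq : varDist μ ν ^ 2 ≤ 2 * I := by
    calc varDist μ ν ^ 2 ≤ Real.sqrt (2 * B) ^ 2 :=
          pow_le_pow_left₀ hv0 (hVle.trans hVB) 2
      _ = 2 * B := Real.sq_sqrt (by positivity)
      _ ≤ 2 * I := by linarith
  calc ((varDist μ ν ^ 2 : ℝ) : EReal) ≤ ((2 * I : ℝ) : EReal) := by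
        exact_mod_cast hsq
    _ = 2 * (I : EReal) := by norm_cast
end
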